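/- Let n = 2 or n = 3, let Z_1, Z_2 ∈ ℝ^n with Z_1 ≠ Z_2, and let d_1 ≥ d_2 ≥ 0. If d_1 + d_2 ≤ ‖Z_2 − Z_1‖, then the set of global minimizers of the distance-error objective O(W) = |‖W − Z_1‖ − d_1| + |‖W − Z_2‖ − d_2| is exactly the set of points W on the closed segment joining Z_1 and Z_2 that satisfy ‖W − Z_1‖ ≥ d_1 and ‖W − Z_2‖ ≥ d_2. -/

import Mathlib

/-- Two measurements, distance error, case (a): if `d₁ + d₂ ≤ ‖Z₂ - Z₁‖`, then the set
of global minimizers of `O(W) = |‖W - Z₁‖ - d₁| + |‖W - Z₂‖ - d₂|` is exactly the set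
of points `W` on the closed segment joining `Z₁` and `Z₂` with `‖W - Z₁‖ ≥ d₁` and
`‖W - Z₂‖ ≥ d₂`. -/
theorem two_meas_distance_error_case_a
    (n : ℕ) (hn : n = 2 ∨ n = 3)
    (Z₁ Z₂ : EuclideanSpace ℝ (Fin n)) (hZ : Z₁ ≠ Z₂)
    (d₁ d₂ : ℝ) (hd₂ : 0 ≤ d₂) (hd : d₂ ≤ d₁)
    (O : EuclideanSpace ℝ (Fin n) → ℝ)
    (hO : ∀ W, O W = |‖W - Z₁‖ - d₁| + |‖W - Z₂‖ - d₂|)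
    (hcase : d₁ + d₂ ≤ ‖Z₂ - Z₁‖) :
    {W : EuclideanSpace ℝ (Fin n) | ∀ V, O W ≤ O V}
      = {W : EuclideanSpace ℝ (Fin n) |
          W ∈ segment ℝ Z₁ Z₂ ∧ d₁ ≤ ‖W - Z₁‖ ∧ d₂ ≤ ‖W - Z₂‖} := by
  set D := ‖Z₂ - Z₁‖ with hD
  have hDpos : 0 < D := norm_pos_iff.mpr (sub_ne_zero.mpr (Ne.symm hZ))
  have hd₁ : 0 ≤ d₁ := le_trans hd₂ hd
  have tri : ∀ V : EuclideanSpace ℝ (Fin n), D ≤ ‖V - Z₁‖ + ‖V - Z₂‖ := by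
    intro V
    have h1 : Z₂ - Z₁ = (V - Z₁) - (V - Z₂) := by abel
    calc D = ‖(V - Z₁) - (V - Z₂)‖ := by rw [hD, h1]
    _ ≤ ‖V - Z₁‖ + ‖V - Z₂‖ := norm_sub_le _ _
  have lower : ∀ V, D - d₁ - d₂ ≤ O V := by
    intro V
    rw [hO]
    have := tri V
    have h1 := le_abs_self (‖V - Z₁‖ - d₁)
    have h2 := le_abs_self (‖V - Z₂‖ - d₂)
    linarith
  -- a minimizing point
  set W₀ : EuclideanSpace ℝ (Fin n) := Z₁ + (d₁ / D) • (Z₂ - Z₁) with hW₀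
  have hW₀1 : ‖W₀ - Z₁‖ = d₁ := by
    have : W₀ - Z₁ = (d₁ / D) • (Z₂ - Z₁) := by rw [hW₀]; abel
    rw [this, norm_smul, Real.norm_eq_abs, abs_of_nonneg (div_nonneg hd₁ hDpos.le), ← hD]
    field_simp
  have hW₀2 : ‖W₀ - Z₂‖ = D - d₁ := by
    have h1 : W₀ - Z₂ = (d₁ / D - 1) • (Z₂ - Z₁) := by
      rw [hW₀, sub_smul, one_smul]; abel
    have hle : d₁ / D ≤ 1 := by
      rw [div_le_one hDpos]; linarith
    rw [h1, norm_smul, Real.norm_eq_abs, abs_of_nonpos (by linarith), ← hD]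
    field_simp
    ring
  have hOW₀ : O W₀ = D - d₁ - d₂ := by
    rw [hO, hW₀1, hW₀2, sub_self, abs_zero, zero_add,
      abs_of_nonneg (by linarith : (0:ℝ) ≤ D - d₁ - d₂)]
  ext W
  simp only [Set.mem_setOf_eq]
  have hseg : W ∈ segment ℝ Z₁ Z₂ ↔ ‖W - Z₁‖ + ‖W - Z₂‖ = D := by
    rw [mem_segment_iff_wbtw, ← dist_add_dist_eq_iff, dist_eq_norm, dist_eq_norm, dist_eq_norm,
      norm_sub_rev Z₁ W, hD, norm_sub_rev Z₂ Z₁]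
  constructor
  · intro h
    have hmin : O W = D - d₁ - d₂ := le_antisymm (hOW₀ ▸ h W₀) (lower W)
    rw [hO] at hmin
    have h1 := le_abs_self (‖W - Z₁‖ - d₁)
    have h2 := le_abs_self (‖W - Z₂‖ - d₂)
    have h1' := abs_nonneg (‖W - Z₁‖ - d₁)
    have h2' := abs_nonneg (‖W - Z₂‖ - d₂)
    have htri := tri W
    have e1 : |‖W - Z₁‖ - d₁| = ‖W - Z₁‖ - d₁ := by linarith
    have e2 : |‖W - Z₂‖ - d₂| = ‖W - Z₂‖ - d₂ := by linarith
    refine ⟨hseg.mpr ?_, by linarith, by linarith⟩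
    rw [e1, e2] at hmin
    linarith
  · rintro ⟨hs, h1, h2⟩ V
    have hsum := hseg.mp hs
    rw [hO, abs_of_nonneg (by linarith), abs_of_nonneg (by linarith)]
    have := lower V
    linarith
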